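/- Let M = [[A, B],[B*, C]] be a Hermitian block matrix with A positive semidefinite and B = A W for some W. Then rank M = rank A if and only if C = W* A W; and in this case M is positive semidefinite. -/

import Mathlib

open Matrix ComplexOrder

private lemma range_prodMap' {R M M' N N' : Type*} [CommRing R]
    [AddCommGroup M] [AddCommGroup M'] [AddCommGroup N] [AddCommGroup N']
    [Module R M] [Module R M'] [Module R N] [Module R N']
    (f : M →ₗ[R] N) (g : M' →ₗ[R] N') :
    LinearMap.range (f.prodMap g) = (LinearMap.range f).prod (LinearMap.range g) := by
  ext ⟨x, y⟩
  simp only [LinearMap.mem_range, Submodule.mem_prod, LinearMap.prodMap_apply, Prod.mk.injEq,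
    Prod.exists]
  exact ⟨fun ⟨a, b, h1, h2⟩ => ⟨⟨a, h1⟩, ⟨b, h2⟩⟩, fun ⟨⟨a, h1⟩, ⟨b, h2⟩⟩ => ⟨a, b, h1, h2⟩⟩

private lemma finrank_prod_submodule' {K V W : Type*} [Field K]
    [AddCommGroup V] [AddCommGroup W] [Module K V] [Module K W]
    (p : Submodule K V) (q : Submodule K W)
    [FiniteDimensional K p] [FiniteDimensional K q] :
    Module.finrank K (p.prod q) = Module.finrank K p + Module.finrank K q := by
  have h : p.prod q = LinearMap.range (p.subtype.prodMap q.subtype) := by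
    rw [range_prodMap', Submodule.range_subtype, Submodule.range_subtype]
  have hinj : Function.Injective (p.subtype.prodMap q.subtype) := by
    intro a b hab
    have h1 := congrArg Prod.fst hab
    have h2 := congrArg Prod.snd hab
    exact Prod.ext (Subtype.ext h1) (Subtype.ext h2)
  rw [h, LinearMap.finrank_range_of_inj hinj, Module.finrank_prod]

private lemma rank_fromBlocks_diag' {m n : ℕ}
    (A : Matrix (Fin m) (Fin m) ℂ) (S : Matrix (Fin n) (Fin n) ℂ) :
    (Matrix.fromBlocks A 0 0 S).rank = A.rank + S.rank := by
  classical
  set e := LinearEquiv.sumArrowLequivProdArrow (Fin m) (Fin n) ℂ ℂ with he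
  have hkey : (Matrix.fromBlocks A 0 0 S).mulVecLin
      = e.symm.toLinearMap ∘ₗ (A.mulVecLin.prodMap S.mulVecLin) ∘ₗ e.toLinearMap := by
    apply LinearMap.ext
    intro v
    funext i
    cases i <;>
      simp [he, Matrix.fromBlocks_mulVec, Matrix.mulVecLin_apply,
        LinearEquiv.sumArrowLequivProdArrow, Equiv.sumArrowEquivProdArrow]
  have hrange : LinearMap.range (Matrix.fromBlocks A 0 0 S).mulVecLin
      = ((LinearMap.range A.mulVecLin).prod (LinearMap.range S.mulVecLin)).map
          e.symm.toLinearMap := by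
    rw [hkey, LinearMap.range_comp, LinearMap.range_comp_of_range_eq_top, range_prodMap']
    exact LinearEquiv.range e
  rw [Matrix.rank, hrange]
  rw [show (e.symm.toLinearMap : _) = (e.symm : _ ≃ₗ[ℂ] _).toLinearMap from rfl]
  rw [LinearEquiv.finrank_map_eq e.symm]
  rw [finrank_prod_submodule']
  rfl

private lemma eq_zero_of_rank_eq_zero' {n : ℕ} (S : Matrix (Fin n) (Fin n) ℂ)
    (h : S.rank = 0) : S = 0 := by
  have h0 : LinearMap.range S.mulVecLin = ⊥ := Submodule.finrank_eq_zero.mp h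
  have hml : S.mulVecLin = 0 := LinearMap.range_eq_bot.mp h0
  ext i j
  have hv : S *ᵥ Pi.single j 1 = 0 := by
    simpa [Matrix.mulVecLin_apply] using LinearMap.congr_fun hml (Pi.single j 1)
  simpa [Matrix.mulVec_single] using congrFun hv i

/-- For `A` positive semidefinite and `B = A * W`, the Hermitian block matrix
`M = [[A, B], [Bᴴ, C]]` satisfies `rank M = rank A` iff `C = Wᴴ * A * W`, and
in that case (flat extension) `M` is positive semidefinite. -/
theorem flat_extension_iff_and_posSemidef (m n : ℕ)
    (A : Matrix (Fin m) (Fin m) ℂ) (B : Matrix (Fin m) (Fin n) ℂ)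
    (C : Matrix (Fin n) (Fin n) ℂ) (W : Matrix (Fin m) (Fin n) ℂ)
    (hA : A.PosSemidef) (hC : C.IsHermitian) (hB : B = A * W) :
    ((Matrix.fromBlocks A B Bᴴ C).rank = A.rank ↔ C = Wᴴ * A * W) ∧
    ((Matrix.fromBlocks A B Bᴴ C).rank = A.rank →
      (Matrix.fromBlocks A B Bᴴ C).PosSemidef) := by
  classical
  set S := C - Wᴴ * A * W with hS
  have hAH : Aᴴ = A := hA.isHermitian
  have hBH : Bᴴ = Wᴴ * A := by rw [hB, conjTranspose_mul, hAH]
  set L : Matrix (Fin m ⊕ Fin n) (Fin m ⊕ Fin n) ℂ := Matrix.fromBlocks 1 0 Wᴴ 1 with hL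
  have hLH : Lᴴ = Matrix.fromBlocks 1 W 0 1 := by
    simp [hL, Matrix.fromBlocks_conjTranspose]
  have hfac : Matrix.fromBlocks A B Bᴴ C = L * Matrix.fromBlocks A 0 0 S * Lᴴ := by
    rw [hLH, hL]
    simp [Matrix.fromBlocks_multiply, hBH, hB, hS, Matrix.mul_assoc, hAH]
  have hdetL : IsUnit L.det := by
    rw [hL, Matrix.det_fromBlocks_zero₁₂]
    simp
  have hdetLH : IsUnit Lᴴ.det := by
    rw [hLH, Matrix.det_fromBlocks_zero₂₁]
    simp
  have hrank : (Matrix.fromBlocks A B Bᴴ C).rank = A.rank + S.rank := by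
    rw [hfac, Matrix.mul_assoc, Matrix.rank_mul_eq_right_of_isUnit_det L _ hdetL,
      Matrix.rank_mul_eq_left_of_isUnit_det Lᴴ _ hdetLH, rank_fromBlocks_diag']
  have hiff : (Matrix.fromBlocks A B Bᴴ C).rank = A.rank ↔ C = Wᴴ * A * W := by
    rw [hrank]
    constructor
    · intro h
      have h0 : S.rank = 0 := by omega
      have hS0 : S = 0 := eq_zero_of_rank_eq_zero' S h0
      rw [hS] at hS0
      exact (sub_eq_zero.mp hS0)
    · intro h
      have hS0 : S = 0 := by rw [hS, h, sub_self]
      rw [hS0, Matrix.rank_zero, add_zero]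
  refine ⟨hiff, fun hr => ?_⟩
  have hCW : C = Wᴴ * A * W := hiff.mp hr
  have hS0 : S = 0 := by rw [hS, hCW, sub_self]
  have hD0 : (Matrix.fromBlocks A 0 0 (0 : Matrix (Fin n) (Fin n) ℂ)).PosSemidef := by
    refine Matrix.PosSemidef.of_dotProduct_mulVec_nonneg ?_ ?_
    · rw [Matrix.IsHermitian, Matrix.fromBlocks_conjTranspose]
      simp [hAH]
    · intro x
      have hx := hA.dotProduct_mulVec_nonneg (x ∘ Sum.inl)
      have : star x ⬝ᵥ (Matrix.fromBlocks A 0 0 (0 : Matrix (Fin n) (Fin n) ℂ) *ᵥ x)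
          = star (x ∘ Sum.inl) ⬝ᵥ (A *ᵥ (x ∘ Sum.inl)) := by
        simp [Matrix.fromBlocks_mulVec, dotProduct, Fintype.sum_sum_type]
      rw [this]
      exact hx
  have := hD0.mul_mul_conjTranspose_same L
  rw [hfac, hS0]
  exact this
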